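/- With the circle setup and for n ≥ 2: the projection uE′(n) → uE(n) forgetting the gap coordinates (φ_j)_j, and the map uE(n) → uE′(n) sending ((ζ_j, r_j)_j) to ((ζ_j, r_j)_j, (θ_j)_j) where θ_j := δ(π(ζ_{j+1 mod n}) − π(ζ_j)), are both well defined, and they are mutually inverse homeomorphisms. Moreover both maps commute with: (a) simultaneous translation of all ζ_j by a fixed element of S¹; (b) the cyclic shift of indices j ↦ j+1 mod n applied simultaneously to the ζ_j, r_j (and φ_j); (c) translation of each individual ζ_j by elements of ker π. -/

import Mathlib

noncomputable section

open Set

/-- The additive circle `S¹ = ℝ/2πℤ`. -/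
abbrev S1 : Type := AddCircle (2 * Real.pi)

/-- The additive circle `B = ℝ/(2π/m)ℤ`, modeling `S¹/C_m`. -/
abbrev CircB (m : ℕ) : Type := AddCircle (2 * Real.pi / m)

/-- The arc `A(ζ, r) = {π(ζ) + s̄ : |s| < r} ∪ {π(ζ)} ⊆ B`. -/
def arcA (m : ℕ) (pr : S1 → CircB m) (ζ : S1) (r : ℝ) : Set (CircB m) :=
  insert (pr ζ) {z | ∃ s : ℝ, |s| < r ∧ z = pr ζ + ((s : ℝ) : CircB m)}

/-- The space `uE(n)` of cyclically ordered configurations of disjoint arcs. -/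
def uE (m n : ℕ) [NeZero n] (pr : S1 → CircB m) (δ : CircB m → ℝ) :
    Set (Fin n → S1 × ℝ) :=
  {x | (∀ j, (x j).2 ∈ Ioc 0 (Real.pi / m)) ∧
    (∀ i j, i ≠ j → arcA m pr (x i).1 (x i).2 ∩ arcA m pr (x j).1 (x j).2 = ∅) ∧
    ∀ i j : Fin n, 0 < (i : ℕ) → (i : ℕ) < (j : ℕ) →
      δ (pr (x i).1 - pr (x 0).1) < δ (pr (x j).1 - pr (x 0).1)}

/-- The space `uE′(n)` of configurations of disjoint arcs together with gap coordinates. -/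
def uE' (m n : ℕ) [NeZero n] (pr : S1 → CircB m) :
    Set ((Fin n → S1 × ℝ) × (Fin n → ℝ)) :=
  {x | (∀ j, (x.1 j).2 ∈ Ioc 0 (Real.pi / m)) ∧
    (∀ j, x.2 j ∈ Ioo 0 (2 * Real.pi / m)) ∧
    (∀ i j, i ≠ j → arcA m pr (x.1 i).1 (x.1 i).2 ∩ arcA m pr (x.1 j).1 (x.1 j).2 = ∅) ∧
    (∀ j, pr (x.1 (j + 1)).1 = pr (x.1 j).1 + ((x.2 j : ℝ) : CircB m)) ∧
    ∑ j, x.2 j = 2 * Real.pi / m}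

/-- The map `uE(n) → uE′(n)` filling in the gap coordinates
`θ_j = δ(π(ζ_{j+1 mod n}) − π(ζ_j))`. -/
def theta (m n : ℕ) [NeZero n] (pr : S1 → CircB m) (δ : CircB m → ℝ)
    (x : Fin n → S1 × ℝ) : (Fin n → S1 × ℝ) × (Fin n → ℝ) :=
  (x, fun j => δ (pr (x (j + 1)).1 - pr (x j).1))

/-- Simultaneous translation of all circle coordinates by `a ∈ S¹`. -/
def transX (n : ℕ) (a : S1) (x : Fin n → S1 × ℝ) : Fin n → S1 × ℝ :=
  fun j => ((x j).1 + a, (x j).2)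

/-- Simultaneous translation on configurations with gaps. -/
def transP (n : ℕ) (a : S1) (y : (Fin n → S1 × ℝ) × (Fin n → ℝ)) :
    (Fin n → S1 × ℝ) × (Fin n → ℝ) :=
  (transX n a y.1, y.2)

/-- Cyclic shift of indices `j ↦ j + 1 (mod n)`. -/
def shiftX (n : ℕ) [NeZero n] (x : Fin n → S1 × ℝ) : Fin n → S1 × ℝ :=
  fun j => x (j - 1)

/-- Cyclic shift of indices on configurations with gaps. -/
def shiftP (n : ℕ) [NeZero n] (y : (Fin n → S1 × ℝ) × (Fin n → ℝ)) :
    (Fin n → S1 × ℝ) × (Fin n → ℝ) :=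
  (shiftX n y.1, fun j => y.2 (j - 1))

/-- Translation of each individual circle coordinate `ζ_j` by `k j`. -/
def kerX (n : ℕ) (k : Fin n → S1) (x : Fin n → S1 × ℝ) : Fin n → S1 × ℝ :=
  fun j => ((x j).1 + k j, (x j).2)

/-- Individual translations on configurations with gaps. -/
def kerP (n : ℕ) (k : Fin n → S1) (y : (Fin n → S1 × ℝ) × (Fin n → ℝ)) :
    (Fin n → S1 × ℝ) × (Fin n → ℝ) :=
  (kerX n k y.1, y.2)

set_option maxHeartbeats 1000000

namespace St5
variable {m : ℕ} {pr : S1 → CircB m}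

lemma hc_pos (hm : 1 ≤ m) : 0 < 2 * Real.pi / m := by
  apply div_pos (by positivity)
  exact_mod_cast Nat.lt_of_lt_of_le Nat.zero_lt_one hm

lemma coe_inj (hm : 1 ≤ m) {t t' : ℝ} (ht : t ∈ Ioc 0 (2 * Real.pi / m))
    (ht' : t' ∈ Ioc 0 (2 * Real.pi / m)) (h : ((t : ℝ) : CircB m) = ((t' : ℝ) : CircB m)) :
    t = t' := by
  set c := 2 * Real.pi / m with hc
  have hc0 : 0 < c := hc_pos hm
  have h0 : ((t - t' : ℝ) : CircB m) = 0 := by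
    rw [AddCircle.coe_sub, h, sub_self]
  obtain ⟨k, hk⟩ := (AddCircle.coe_eq_zero_iff _).1 h0
  have habs : |t - t'| < c := by
    rw [abs_sub_lt_iff]
    constructor <;> nlinarith [ht.1, ht.2, ht'.1, ht'.2]
  have hk' : (k : ℝ) * c = t - t' := by rw [← hk]; simp [zsmul_eq_mul, hc]
  have : k = 0 := by
    by_contra hk0
    have h1 : (1 : ℝ) ≤ |(k : ℝ)| := by exact_mod_cast Int.one_le_abs hk0
    have h2 : |(k : ℝ) * c| = |(k:ℝ)| * c := by rw [abs_mul, abs_of_pos hc0]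
    rw [hk'] at h2
    nlinarith [habs]
  rw [this] at hk'
  simp at hk'
  linarith

section Pr
variable (hpr : ∀ s : ℝ, pr ((s : ℝ) : S1) = ((s : ℝ) : CircB m))
include hpr

lemma pr_add (ζ ξ : S1) : pr (ζ + ξ) = pr ζ + pr ξ := by
  induction ζ using QuotientAddGroup.induction_on with | H s =>
  induction ξ using QuotientAddGroup.induction_on with | H t =>
  rw [← AddCircle.coe_add, hpr, hpr, hpr, AddCircle.coe_add]

lemma pr_sub (ζ ξ : S1) : pr (ζ - ξ) = pr ζ - pr ξ := by
  induction ζ using QuotientAddGroup.induction_on with | H s =>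
  induction ξ using QuotientAddGroup.induction_on with | H t =>
  rw [← AddCircle.coe_sub, hpr, hpr, hpr, AddCircle.coe_sub]

lemma pr_cont : Continuous pr := by
  refine ((QuotientAddGroup.isQuotientMap_mk
    (AddSubgroup.zmultiples (2 * Real.pi))).continuous_iff).2 ?_
  have : (pr ∘ (QuotientAddGroup.mk : ℝ → S1)) = fun s : ℝ => ((s : ℝ) : CircB m) := by
    funext s; exact hpr s
  rw [this]
  exact AddCircle.continuous_mk' _

lemma mem_arc_translate (a ζ : S1) (r : ℝ) (z : CircB m) :
    z ∈ arcA m pr (ζ + a) r ↔ z - pr a ∈ arcA m pr ζ r := by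
  simp only [arcA, Set.mem_insert_iff, Set.mem_setOf_eq, pr_add hpr, sub_eq_iff_eq_add]
  constructor
  · rintro (h | ⟨s, hs, h⟩)
    · left; rw [h]; try abel
    · right; exact ⟨s, hs, by rw [h]; try abel⟩
  · rintro (h | ⟨s, hs, h⟩)
    · left; rw [h]; try abel
    · right; exact ⟨s, hs, by rw [h]; try abel⟩

lemma arc_ker {k : S1} (hk : pr k = 0) (ζ : S1) (r : ℝ) :
    arcA m pr (ζ + k) r = arcA m pr ζ r := by
  simp only [arcA, pr_add hpr, hk, add_zero]

end Pr

section Delta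
variable {δ : CircB m → ℝ} (hm : 1 ≤ m)
variable (hδ : ∀ z : CircB m, δ z ∈ Ioc 0 (2 * Real.pi / m) ∧ ((δ z : ℝ) : CircB m) = z)
include hm hδ

lemma delta_eq {z : CircB m} {t : ℝ} (ht : t ∈ Ioc 0 (2 * Real.pi / m))
    (h : ((t : ℝ) : CircB m) = z) : δ z = t :=
  coe_inj hm (hδ z).1 ht (by rw [(hδ z).2, h])

omit hm in
lemma delta_lt {z : CircB m} (hz : z ≠ 0) : δ z < 2 * Real.pi / m := by
  rcases lt_or_eq_of_le (hδ z).1.2 with h | h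
  · exact h
  · exact absurd (by rw [← (hδ z).2, h, AddCircle.coe_period]) hz.symm

omit hm in
lemma delta_continuousAt (hm' : 1 ≤ m) {z : CircB m} (hz : z ≠ 0) : ContinuousAt δ z := by
  haveI : Fact (0 < 2 * Real.pi / m) := ⟨hc_pos hm'⟩
  have heq : δ = fun w => ((AddCircle.equivIoc (2 * Real.pi / m) 0 w : Ioc (0:ℝ) (0 + 2 * Real.pi / m)) : ℝ) := by
    funext w
    have h1 := (AddCircle.equivIoc (2 * Real.pi / m) 0).symm_apply_apply w
    refine delta_eq hm' hδ ?_ ?_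
    · simpa using (AddCircle.equivIoc (2 * Real.pi / m) 0 w).2
    · exact h1
  rw [heq]
  have h0 : z ≠ ((0 : ℝ) : CircB m) := by simpa using hz
  exact (continuous_subtype_val.continuousAt).comp (AddCircle.continuousAt_equivIoc _ _ h0)

end Delta

section Sums
open Fin.NatCast
variable {n : ℕ} [NeZero n]
variable (x : Fin n → S1 × ℝ)

lemma fin_one_ne_zero (hn : 2 ≤ n) : (1 : Fin n) ≠ 0 := by
  intro h
  have := congrArg Fin.val h
  rw [Fin.val_one' n, Fin.val_zero, Nat.mod_eq_of_lt hn] at this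
  omega

lemma fin_succ_ne (hn : 2 ≤ n) (j : Fin n) : j + 1 ≠ j := by
  intro h
  have h1 : (1 : Fin n) = 0 := by
    have := congrArg (fun w => w - j) h
    simpa [add_sub_cancel_left, sub_self, add_comm] using this
  exact fin_one_ne_zero hn h1

lemma partial_class (φ : Fin n → ℝ)
    (hrel : ∀ j, pr (x (j + 1)).1 = pr (x j).1 + ((φ j : ℝ) : CircB m)) (i : ℕ) :
    pr (x ((i : Fin n))).1
      = pr (x 0).1 + ((∑ l ∈ Finset.range i, φ ((l : Fin n)) : ℝ) : CircB m) := by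
  induction i with
  | zero =>
      rw [Finset.range_zero, Finset.sum_empty, Nat.cast_zero, QuotientAddGroup.mk_zero, add_zero]
  | succ i ih =>
      have hcast : ((i + 1 : ℕ) : Fin n) = ((i : ℕ) : Fin n) + 1 := by push_cast; ring
      rw [hcast, hrel, ih, Finset.sum_range_succ, AddCircle.coe_add, add_assoc]

variable {δ : CircB m → ℝ} (hm : 1 ≤ m) (hn : 2 ≤ n)
variable (hδ : ∀ z : CircB m, δ z ∈ Ioc 0 (2 * Real.pi / m) ∧ ((δ z : ℝ) : CircB m) = z)

lemma sum_mono (φ : Fin n → ℝ) (hφ : ∀ j, 0 < φ j) {a b : ℕ} (hab : a < b) :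
    ∑ l ∈ Finset.range a, φ ((l : Fin n)) < ∑ l ∈ Finset.range b, φ ((l : Fin n)) := by
  refine Finset.sum_lt_sum_of_subset (Finset.range_subset_range.2 (le_of_lt hab))
    (Finset.mem_range.2 hab) (by simp) (hφ _) ?_
  intro j _ _
  exact le_of_lt (hφ _)

lemma sum_range_n (φ : Fin n → ℝ) :
    ∑ l ∈ Finset.range n, φ ((l : Fin n)) = ∑ j : Fin n, φ j := by
  rw [← Fin.sum_univ_eq_sum_range (fun l => φ ((l : Fin n))) n]
  exact Finset.sum_congr rfl (fun a _ => by rw [Fin.cast_val_eq_self])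

include hm hδ in
lemma ord_of_gaps (φ : Fin n → ℝ)
    (hφ : ∀ j, φ j ∈ Ioo 0 (2 * Real.pi / m))
    (hrel : ∀ j, pr (x (j + 1)).1 = pr (x j).1 + ((φ j : ℝ) : CircB m))
    (hsum : ∑ j, φ j = 2 * Real.pi / m) :
    ∀ i j : Fin n, 0 < (i : ℕ) → (i : ℕ) < (j : ℕ) →
      δ (pr (x i).1 - pr (x 0).1) < δ (pr (x j).1 - pr (x 0).1) := by
  intro i j hi hij
  have hSn : ∑ l ∈ Finset.range n, φ ((l : Fin n)) = 2 * Real.pi / m := by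
    rw [sum_range_n, hsum]
  have hmono : ∀ a b : ℕ, a < b →
      ∑ l ∈ Finset.range a, φ ((l : Fin n)) < ∑ l ∈ Finset.range b, φ ((l : Fin n)) :=
    fun a b hab => sum_mono φ (fun j => (hφ j).1) hab
  have key : ∀ a : Fin n, 0 < (a : ℕ) →
      δ (pr (x a).1 - pr (x 0).1) = ∑ l ∈ Finset.range (a : ℕ), φ ((l : Fin n)) := by
    intro a ha
    refine delta_eq hm hδ ⟨?_, ?_⟩ ?_
    · have := hmono 0 (a : ℕ) ha
      simpa using this
    · rw [← hSn]
      exact le_of_lt (hmono _ n a.isLt)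
    · have h := partial_class x φ hrel (a : ℕ)
      rw [Fin.cast_val_eq_self] at h
      rw [h]; abel
  rw [key i hi, key j (lt_trans hi hij)]
  exact hmono _ _ hij

include hm hn hδ in
set_option maxHeartbeats 2000000 in
lemma theta_sum
    (hne : ∀ i j : Fin n, i ≠ j → pr (x i).1 ≠ pr (x j).1)
    (hord : ∀ i j : Fin n, 0 < (i : ℕ) → (i : ℕ) < (j : ℕ) →
      δ (pr (x i).1 - pr (x 0).1) < δ (pr (x j).1 - pr (x 0).1)) :
    ∑ j : Fin n, δ (pr (x (j + 1)).1 - pr (x j).1) = 2 * Real.pi / m := by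
  have hc0 : 0 < 2 * Real.pi / m := hc_pos hm
  set θ : Fin n → ℝ := fun j => δ (pr (x (j + 1)).1 - pr (x j).1) with hθ
  have hrel : ∀ j, pr (x (j + 1)).1 = pr (x j).1 + ((θ j : ℝ) : CircB m) := by
    intro j
    simp only [hθ]
    rw [(hδ _).2]
    abel
  have hθpos : ∀ j, 0 < θ j := fun j => (hδ _).1.1
  have hθlt : ∀ j, θ j < 2 * Real.pi / m := fun j =>
    delta_lt hδ (sub_ne_zero.2 (hne _ _ (fin_succ_ne hn j)))
  have hmono : ∀ a b : ℕ, a < b →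
      ∑ l ∈ Finset.range a, θ ((l : Fin n)) < ∑ l ∈ Finset.range b, θ ((l : Fin n)) :=
    fun a b hab => sum_mono θ hθpos hab
  have hSpos : ∀ a : ℕ, 0 < a → 0 < ∑ l ∈ Finset.range a, θ ((l : Fin n)) := by
    intro a ha
    have := hmono 0 a ha
    simpa using this
  have hclass : ∀ i : ℕ,
      ((∑ l ∈ Finset.range i, θ ((l : Fin n)) : ℝ) : CircB m)
        = pr (x ((i : Fin n))).1 - pr (x 0).1 := by
    intro i
    have h := partial_class x θ hrel i
    rw [h]; abel
  have hvlt : ∀ i : ℕ, i < n → (((i : ℕ) : Fin n) : ℕ) = i := fun i h => Fin.val_cast_of_lt h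
  have hdlt : ∀ i : ℕ, 0 < i → i < n →
      δ (pr (x ((i : Fin n))).1 - pr (x 0).1) < 2 * Real.pi / m := by
    intro i h1 h2
    refine delta_lt hδ (sub_ne_zero.2 (hne _ _ ?_))
    intro hcon
    have := congrArg Fin.val hcon
    rw [hvlt i h2, Fin.val_zero] at this
    omega
  have key : ∀ i : ℕ, 1 ≤ i → i ≤ n - 1 →
      ∑ l ∈ Finset.range i, θ ((l : Fin n))
        = δ (pr (x ((i : Fin n))).1 - pr (x 0).1) := by
    intro i hi
    induction i, hi using Nat.le_induction with
    | base =>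
        intro _
        have h1 : ((1 : ℕ) : Fin n) = (0 : Fin n) + 1 := by push_cast; rw [zero_add]
        rw [Finset.sum_range_one, Nat.cast_zero, h1]
    | succ i hi ih =>
        intro hile
        have hin : i + 1 < n := by omega
        have ihh := ih (by omega)
        by_cases hle : (∑ l ∈ Finset.range i, θ ((l : Fin n))) + θ ((i : Fin n)) ≤ 2 * Real.pi / m
        · symm
          refine delta_eq hm hδ ⟨?_, ?_⟩ (hclass (i + 1))
          · exact hSpos _ (by omega)
          · rw [Finset.sum_range_succ]
            exact hle
        · exfalso
          push_neg at hle
          set T := (∑ l ∈ Finset.range i, θ ((l : Fin n))) + θ ((i : Fin n)) with hT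
          have hstep : ∑ l ∈ Finset.range (i + 1), θ ((l : Fin n)) = T := by
            rw [Finset.sum_range_succ]
          have hSilt : ∑ l ∈ Finset.range i, θ ((l : Fin n)) < 2 * Real.pi / m := by
            rw [ihh]
            exact hdlt i (by omega) (by omega)
          have ht1 : 0 < T - 2 * Real.pi / m := by linarith
          have ht2 : T - 2 * Real.pi / m < 2 * Real.pi / m := by
            have h2 := hθlt ((i : Fin n))
            rw [hT]
            linarith
          have hcl : ((T - 2 * Real.pi / m : ℝ) : CircB m)
              = pr (x (((i + 1 : ℕ) : Fin n))).1 - pr (x 0).1 := by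
            rw [AddCircle.coe_sub, AddCircle.coe_period, sub_zero, ← hstep, hclass]
          have hdel : δ (pr (x (((i + 1 : ℕ) : Fin n))).1 - pr (x 0).1)
              = T - 2 * Real.pi / m :=
            delta_eq hm hδ ⟨ht1, le_of_lt ht2⟩ hcl
          have hordi := hord ((i : Fin n)) (((i + 1 : ℕ) : Fin n))
            (by rw [hvlt i (by omega)]; omega)
            (by rw [hvlt i (by omega), hvlt (i + 1) hin]; omega)
          rw [← ihh, hdel] at hordi
          have h2 := hθlt ((i : Fin n))
          rw [hT] at hordi
          linarith
  obtain ⟨N, hN⟩ : ∃ N, n = N + 1 := ⟨n - 1, by omega⟩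
  have hNlt : N < n := by omega
  have hN1 : 1 ≤ N := by omega
  have hkey := key N hN1 (by omega)
  have hSn : ∑ l ∈ Finset.range n, θ ((l : Fin n))
      = (∑ l ∈ Finset.range N, θ ((l : Fin n))) + θ ((N : Fin n)) := by
    have hr : Finset.range n = Finset.range (N + 1) := by rw [hN]
    rw [hr, Finset.sum_range_succ]
  have hSnpos : 0 < ∑ l ∈ Finset.range n, θ ((l : Fin n)) := hSpos n (by omega)
  have hSnlt : ∑ l ∈ Finset.range n, θ ((l : Fin n)) < 2 * (2 * Real.pi / m) := by
    have h1 : ∑ l ∈ Finset.range N, θ ((l : Fin n)) < 2 * Real.pi / m := by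
      rw [hkey]
      exact hdlt N (by omega) hNlt
    have h2 := hθlt ((N : Fin n))
    rw [hSn]
    linarith
  have hcl0 : ((∑ l ∈ Finset.range n, θ ((l : Fin n)) : ℝ) : CircB m) = 0 := by
    rw [hclass n, Fin.natCast_self, sub_self]
  obtain ⟨k, hk⟩ := (AddCircle.coe_eq_zero_iff _).1 hcl0
  have hk' : (k : ℝ) * (2 * Real.pi / m) = ∑ l ∈ Finset.range n, θ ((l : Fin n)) := by
    rw [← hk]; simp [zsmul_eq_mul]
  have hk1 : k = 1 := by
    have h1 : (1 : ℤ) ≤ k := by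
      by_contra h
      push_neg at h
      have hk0 : k ≤ 0 := by omega
      have : (k : ℝ) ≤ 0 := by exact_mod_cast hk0
      nlinarith
    have h2 : k ≤ 1 := by
      by_contra h
      push_neg at h
      have : (2 : ℝ) ≤ (k : ℝ) := by exact_mod_cast h
      nlinarith
    omega
  rw [hk1] at hk'
  rw [← sum_range_n θ, ← hk']
  ring

end Sums
end St5

open St5 in
/-- The projection `uE′(n) → uE(n)` forgetting the gap coordinates and
the map `uE(n) → uE′(n)` filling in the gaps `θ_j = δ(π(ζ_{j+1}) − π(ζ_j))` are well
defined, mutually inverse homeomorphisms, and both commute with (a) simultaneous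
translation by elements of `S¹`, (b) the cyclic shift of indices, and (c) translation of
the individual `ζ_j` by elements of `ker π`. -/
theorem stmt_5 (m n : ℕ) (hm : 1 ≤ m) (hn : 2 ≤ n) [NeZero n]
    (pr : S1 → CircB m) (hpr : ∀ s : ℝ, pr ((s : ℝ) : S1) = ((s : ℝ) : CircB m))
    (δ : CircB m → ℝ)
    (hδ : ∀ z : CircB m, δ z ∈ Ioc 0 (2 * Real.pi / m) ∧ ((δ z : ℝ) : CircB m) = z) :
    Set.MapsTo Prod.fst (uE' m n pr) (uE m n pr δ) ∧
    Set.MapsTo (theta m n pr δ) (uE m n pr δ) (uE' m n pr) ∧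
    Set.InvOn (theta m n pr δ) Prod.fst (uE' m n pr) (uE m n pr δ) ∧
    (∃ e : ↥(uE' m n pr) ≃ₜ ↥(uE m n pr δ),
      (∀ y : ↥(uE' m n pr), (e y).val = y.val.1) ∧
      (∀ x : ↥(uE m n pr δ), (e.symm x).val = theta m n pr δ x.val)) ∧
    (∀ a : S1,
      Set.MapsTo (transX n a) (uE m n pr δ) (uE m n pr δ) ∧
      Set.MapsTo (transP n a) (uE' m n pr) (uE' m n pr) ∧
      (∀ x ∈ uE m n pr δ, theta m n pr δ (transX n a x) = transP n a (theta m n pr δ x)) ∧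
      (∀ y ∈ uE' m n pr, (transP n a y).1 = transX n a y.1)) ∧
    (Set.MapsTo (shiftX n) (uE m n pr δ) (uE m n pr δ) ∧
      Set.MapsTo (shiftP n) (uE' m n pr) (uE' m n pr) ∧
      (∀ x ∈ uE m n pr δ, theta m n pr δ (shiftX n x) = shiftP n (theta m n pr δ x)) ∧
      (∀ y ∈ uE' m n pr, (shiftP n y).1 = shiftX n y.1)) ∧
    (∀ k : Fin n → S1, (∀ j, pr (k j) = 0) →
      Set.MapsTo (kerX n k) (uE m n pr δ) (uE m n pr δ) ∧
      Set.MapsTo (kerP n k) (uE' m n pr) (uE' m n pr) ∧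
      (∀ x ∈ uE m n pr δ, theta m n pr δ (kerX n k x) = kerP n k (theta m n pr δ x)) ∧
      (∀ y ∈ uE' m n pr, (kerP n k y).1 = kerX n k y.1)) := by

  classical
  set c := 2 * Real.pi / m with hc
  -- pr is injective-compatible helper
  have pr_ne : ∀ (x : Fin n → S1 × ℝ),
      (∀ i j, i ≠ j → arcA m pr (x i).1 (x i).2 ∩ arcA m pr (x j).1 (x j).2 = ∅) →
      ∀ i j : Fin n, i ≠ j → pr (x i).1 ≠ pr (x j).1 := by
    intro x hdis i j hij h
    have hmem : pr (x i).1 ∈ arcA m pr (x i).1 (x i).2 ∩ arcA m pr (x j).1 (x j).2 :=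
      ⟨Set.mem_insert _ _, by rw [h]; exact Set.mem_insert _ _⟩
    rw [hdis i j hij] at hmem
    exact hmem
  have part1 : Set.MapsTo Prod.fst (uE' m n pr) (uE m n pr δ) := by
    rintro ⟨x, φ⟩ ⟨hr, hφ, hdis, hrel, hsum⟩
    exact ⟨hr, hdis, St5.ord_of_gaps x hm hδ φ hφ hrel hsum⟩
  have part2 : Set.MapsTo (theta m n pr δ) (uE m n pr δ) (uE' m n pr) := by
    rintro x ⟨hr, hdis, hord⟩
    refine ⟨hr, ?_, hdis, ?_, ?_⟩
    · intro j
      exact ⟨(hδ _).1.1,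
        St5.delta_lt hδ (sub_ne_zero.2 (pr_ne x hdis _ _ (St5.fin_succ_ne hn j)))⟩
    · intro j
      show pr (x (j + 1)).1
          = pr (x j).1 + ((δ (pr (x (j + 1)).1 - pr (x j).1) : ℝ) : CircB m)
      rw [(hδ _).2]
      abel
    · exact St5.theta_sum x hm hn hδ (pr_ne x hdis) hord
  have hinv : Set.InvOn (theta m n pr δ) Prod.fst (uE' m n pr) (uE m n pr δ) := by
    constructor
    · rintro ⟨x, φ⟩ ⟨hr, hφ, hdis, hrel, hsum⟩
      show theta m n pr δ x = (x, φ)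
      refine congrArg (Prod.mk x) (funext fun j => ?_)
      exact St5.delta_eq hm hδ ⟨(hφ j).1, le_of_lt (hφ j).2⟩ (by rw [hrel j]; abel)
    · intro x _
      rfl
  have transP_maps : ∀ a : S1, Set.MapsTo (transP n a) (uE' m n pr) (uE' m n pr) := by
    intro a
    rintro ⟨x, φ⟩ ⟨hr, hφ, hdis, hrel, hsum⟩
    refine ⟨hr, hφ, ?_, ?_, hsum⟩
    · intro i j hij
      rw [Set.eq_empty_iff_forall_notMem]
      intro z hz
      have h1 := (St5.mem_arc_translate hpr a (x i).1 (x i).2 z).1 hz.1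
      have h2 := (St5.mem_arc_translate hpr a (x j).1 (x j).2 z).1 hz.2
      have hd := hdis i j hij
      rw [Set.eq_empty_iff_forall_notMem] at hd
      exact hd _ ⟨h1, h2⟩
    · intro j
      show pr ((x (j + 1)).1 + a) = pr ((x j).1 + a) + ((φ j : ℝ) : CircB m)
      rw [St5.pr_add hpr, St5.pr_add hpr, hrel j]
      abel
  have kerP_maps : ∀ (k : Fin n → S1), (∀ j, pr (k j) = 0) →
      Set.MapsTo (kerP n k) (uE' m n pr) (uE' m n pr) := by
    intro k hk
    rintro ⟨x, φ⟩ ⟨hr, hφ, hdis, hrel, hsum⟩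
    refine ⟨hr, hφ, ?_, ?_, hsum⟩
    · intro i j hij
      show arcA m pr ((x i).1 + k i) (x i).2 ∩ arcA m pr ((x j).1 + k j) (x j).2 = ∅
      rw [St5.arc_ker hpr (hk i), St5.arc_ker hpr (hk j)]
      exact hdis i j hij
    · intro j
      show pr ((x (j + 1)).1 + k (j + 1)) = pr ((x j).1 + k j) + ((φ j : ℝ) : CircB m)
      rw [St5.pr_add hpr, St5.pr_add hpr, hk (j + 1), hk j, add_zero, add_zero, hrel j]
  have shiftP_maps : Set.MapsTo (shiftP n) (uE' m n pr) (uE' m n pr) := by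
    rintro ⟨x, φ⟩ ⟨hr, hφ, hdis, hrel, hsum⟩
    refine ⟨fun j => hr (j - 1), fun j => hφ (j - 1), ?_, ?_, ?_⟩
    · intro i j hij
      exact hdis (i - 1) (j - 1) (fun h => hij (by simpa [sub_left_inj] using h))
    · intro j
      show pr (x (j + 1 - 1)).1 = pr (x (j - 1)).1 + ((φ (j - 1) : ℝ) : CircB m)
      have hidx : j + 1 - 1 = (j - 1) + 1 := (sub_add_eq_add_sub j 1 1).symm
      rw [hidx, hrel (j - 1)]
    · show ∑ j, φ (j - 1) = _
      rw [← hsum]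
      exact Fintype.sum_equiv (Equiv.subRight 1) _ _ (fun j => rfl)
  have theta_trans : ∀ (a : S1) (x : Fin n → S1 × ℝ),
      theta m n pr δ (transX n a x) = transP n a (theta m n pr δ x) := by
    intro a x
    refine congrArg (Prod.mk (transX n a x)) (funext fun j => ?_)
    show δ (pr ((x (j + 1)).1 + a) - pr ((x j).1 + a)) = δ (pr (x (j + 1)).1 - pr (x j).1)
    rw [St5.pr_add hpr, St5.pr_add hpr]
    congr 1
    abel
  have theta_shift : ∀ (x : Fin n → S1 × ℝ),
      theta m n pr δ (shiftX n x) = shiftP n (theta m n pr δ x) := by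
    intro x
    refine congrArg (Prod.mk (shiftX n x)) (funext fun j => ?_)
    show δ (pr (x (j + 1 - 1)).1 - pr (x (j - 1)).1)
        = δ (pr (x ((j - 1) + 1)).1 - pr (x (j - 1)).1)
    have hidx : j + 1 - 1 = (j - 1) + 1 := (sub_add_eq_add_sub j 1 1).symm
    rw [hidx]
  have theta_ker : ∀ (k : Fin n → S1), (∀ j, pr (k j) = 0) → ∀ (x : Fin n → S1 × ℝ),
      theta m n pr δ (kerX n k x) = kerP n k (theta m n pr δ x) := by
    intro k hk x
    refine congrArg (Prod.mk (kerX n k x)) (funext fun j => ?_)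
    show δ (pr ((x (j + 1)).1 + k (j + 1)) - pr ((x j).1 + k j))
        = δ (pr (x (j + 1)).1 - pr (x j).1)
    rw [St5.pr_add hpr, St5.pr_add hpr, hk (j + 1), hk j, add_zero, add_zero]
  refine ⟨part1, part2, hinv, ?_, ?_, ?_, ?_⟩
  · -- homeomorphism
    have hE : Continuous fun (y : ↥(uE' m n pr)) => (⟨y.1.1, part1 y.2⟩ : ↥(uE m n pr δ)) :=
      Continuous.subtype_mk (continuous_fst.comp continuous_subtype_val) _
    have hcoord : ∀ i : Fin n,
        Continuous fun (q : ↥(uE m n pr δ)) => pr ((q.1 i).1) := fun i =>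
      (St5.pr_cont hpr).comp (continuous_fst.comp
        ((continuous_apply i).comp continuous_subtype_val))
    have hF : Continuous fun (q : ↥(uE m n pr δ)) =>
        (⟨theta m n pr δ q.1, part2 q.2⟩ : ↥(uE' m n pr)) := by
      refine Continuous.subtype_mk ?_ _
      refine Continuous.prodMk continuous_subtype_val ?_
      refine continuous_pi fun j => ?_
      rw [continuous_iff_continuousAt]
      intro q
      have hg : Continuous fun (q : ↥(uE m n pr δ)) =>
          pr ((q.1 (j + 1)).1) - pr ((q.1 j).1) := (hcoord (j + 1)).sub (hcoord j)
      have hz : pr ((q.1 (j + 1)).1) - pr ((q.1 j).1) ≠ 0 :=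
        sub_ne_zero.2 (pr_ne q.1 q.2.2.1 _ _ (St5.fin_succ_ne hn j))
      exact ContinuousAt.comp (g := δ)
        (f := fun (q : ↥(uE m n pr δ)) => pr ((q.1 (j + 1)).1) - pr ((q.1 j).1))
        (St5.delta_continuousAt hδ hm hz) hg.continuousAt
    refine ⟨⟨⟨fun y => ⟨y.1.1, part1 y.2⟩, fun q => ⟨theta m n pr δ q.1, part2 q.2⟩,
      fun y => Subtype.ext (hinv.1 y.2), fun q => Subtype.ext rfl⟩, hE, hF⟩,
      fun y => rfl, fun q => rfl⟩
  · -- translations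
    intro a
    refine ⟨?_, transP_maps a, fun x hx => theta_trans a x, fun y _ => rfl⟩
    intro x hx
    have h := part1 (transP_maps a (part2 hx))
    exact h
  · -- shift
    refine ⟨?_, shiftP_maps, fun x hx => theta_shift x, fun y _ => rfl⟩
    intro x hx
    have h := part1 (shiftP_maps (part2 hx))
    exact h
  · -- kernel translations
    intro k hk
    refine ⟨?_, kerP_maps k hk, fun x hx => theta_ker k hk x, fun y _ => rfl⟩
    intro x hx
    have h := part1 (kerP_maps k hk (part2 hx))
    exact h


end
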